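/- Let X_1,…,X_n be the indicators of red draws in the Pólya urn model, let X_n' be a random variable whose conditional distribution given (X_1,…,X_n) equals the conditional distribution of X_n given (X_1,…,X_{n−1}), let W = (1/n)∑_{j=1}^n X_j and W' = W − X_n/n + X_n'/n. Then E[(W' − W)² | W] = ((2n+b−a)W − 2nW² + a)/(n²(a+b+n−1)); equivalently, with λ = 1/(n(a+b+n−1)), one has (1/(2λ))·E[(W' − W)² | W] = W(1−W) + ((b−a)/(2n))·W + a/(2n). -/

import Mathlib

open MeasureTheory Set Filter Topology

set_option maxHeartbeats 1000000

noncomputable section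

/-- The Pólya pmf of the vector `(X_1, …, X_n)` of indicators of red draws, evaluated at a
pattern `x ∈ {0,1}ⁿ` (as a `Bool`-vector): with `k = ∑ x_j`,
`P(X = x) = ∏_{i<k}(r+ci) ∏_{j<n-k}(w+cj) / ∏_{l<n}(r+w+cl)`. -/
def polyaPMF (n r w c : ℕ) (x : Fin n → Bool) : ℝ :=
  ((∏ i ∈ Finset.range (Finset.univ.filter (fun j => x j = true)).card, ((r : ℝ) + c * i)) *
      ∏ j ∈ Finset.range (n - (Finset.univ.filter (fun j => x j = true)).card),
        ((w : ℝ) + c * j)) /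
    ∏ l ∈ Finset.range n, ((r : ℝ) + w + c * l)

-- ===== auxiliary lemmas (tested separately) =====
lemma filter_card_comp_equiv {n : ℕ} (x : Fin n → Bool) (e : Equiv.Perm (Fin n)) :
    (Finset.univ.filter fun i => x (e i) = true).card
      = (Finset.univ.filter fun i => x i = true).card := by
  have h : (Finset.univ.filter fun i => x (e i) = true)
      = (Finset.univ.filter fun i => x i = true).map e.symm.toEmbedding := by
    ext i
    simp [Finset.mem_map, Equiv.symm_apply_eq, eq_comm (a := i)]
  rw [h, Finset.card_map]

lemma count_constraint {n : ℕ} (k : ℕ) (i : Fin n) :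
    k * (Finset.univ.filter fun x : Fin n → Bool =>
        (Finset.univ.filter fun j => x j = true).card = k).card
      = n * (Finset.univ.filter fun x : Fin n → Bool =>
        (Finset.univ.filter fun j => x j = true).card = k ∧ x i = true).card := by
  classical
  set S := Finset.univ.filter fun x : Fin n → Bool =>
      (Finset.univ.filter fun j => x j = true).card = k with hS
  have hNinv : ∀ j : Fin n, (S.filter fun x => x j = true).card
      = (S.filter fun x => x i = true).card := by
    intro j
    refine Finset.card_nbij' (fun x => x ∘ Equiv.swap j i) (fun x => x ∘ Equiv.swap j i) ?_ ?_ ?_ ?_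
    · intro x hx
      simp only [hS, Finset.mem_coe, Finset.mem_filter, Finset.mem_univ, true_and] at hx ⊢
      refine ⟨?_, ?_⟩
      · simpa [Function.comp] using (filter_card_comp_equiv x (Equiv.swap j i)).trans hx.1
      · simpa [Function.comp, Equiv.swap_apply_right] using hx.2
    · intro x hx
      simp only [hS, Finset.mem_coe, Finset.mem_filter, Finset.mem_univ, true_and] at hx ⊢
      refine ⟨?_, ?_⟩
      · simpa [Function.comp] using (filter_card_comp_equiv x (Equiv.swap j i)).trans hx.1
      · simpa [Function.comp, Equiv.swap_apply_left] using hx.2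
    · intro x _; funext i'; simp [Function.comp]
    · intro x _; funext i'; simp [Function.comp]
  have h1 : k * S.card = ∑ x ∈ S, (Finset.univ.filter fun j => x j = true).card := by
    rw [Finset.sum_congr rfl (fun x hx => (Finset.mem_filter.mp hx).2), Finset.sum_const,
      smul_eq_mul, mul_comm]
  have h2 : ∑ x ∈ S, (Finset.univ.filter fun j => x j = true).card
      = ∑ j : Fin n, (S.filter fun x => x j = true).card := by
    simp only [Finset.card_filter]
    rw [Finset.sum_comm]
  rw [h1, h2, Finset.sum_congr rfl (fun j _ => hNinv j), Finset.sum_const, smul_eq_mul]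
  simp [hS, Finset.filter_filter, Finset.card_univ]

lemma polya_alg (n k r w c x y : ℝ) (hn : 1 ≤ n) (hr : 0 < r) (hw : 0 < w) (hc : 0 < c)
    (hcon : k * (x + y) = n * x) :
    x * (w + c * (n - k)) + y * (r + c * k)
      = (x + y) * (((2 * n + w / c - r / c) * (k / n) - 2 * n * (k / n) ^ 2 + r / c)
          / (n ^ 2 * (r / c + w / c + n - 1))) * ((r + w + c * (n - 1)) * n ^ 2) := by
  have hn0 : (0:ℝ) < n := lt_of_lt_of_le one_pos hn
  have hc' : c ≠ 0 := ne_of_gt hc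
  have hn' : (n:ℝ) ≠ 0 := ne_of_gt hn0
  have hs : 0 < r / c + w / c + n - 1 := by
    have h1 : r / c + w / c + n - 1 = r / c + w / c + (n - 1) := by ring
    rw [h1]
    have : (0:ℝ) ≤ n - 1 := by linarith
    positivity
  have hs' : r / c + w / c + n - 1 ≠ 0 := ne_of_gt hs
  have hR : r + w + c * (n - 1) = c * (r / c + w / c + n - 1) := by
    field_simp
    ring
  set T : ℝ := (2 * n + w / c - r / c) * (k / n) - 2 * n * (k / n) ^ 2 + r / c with hT
  have h2 : n ^ 2 * (r / c + w / c + n - 1) ≠ 0 := by positivity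
  have key : T / (n ^ 2 * (r / c + w / c + n - 1)) * ((r + w + c * (n - 1)) * n ^ 2)
      = T * c := by
    rw [hR, div_mul_eq_mul_div, div_eq_iff h2]
    ring
  have hrhs : (x + y) * (T / (n ^ 2 * (r / c + w / c + n - 1)))
        * ((r + w + c * (n - 1)) * n ^ 2) = (x + y) * T * c := by
    rw [mul_assoc, key, mul_assoc]
  rw [hrhs]
  set S : ℝ := x + y with hS
  have hx : x = k * S / n := by
    rw [eq_div_iff hn']
    linarith [hcon]
  have hy : y = (n - k) * S / n := by
    rw [eq_div_iff hn']
    have : n * y = n * S - n * x := by rw [hS]; ring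
    rw [mul_comm y n, this, ← hcon]
    ring
  rw [hx, hy, hT]
  field_simp
  ring

lemma integrable_of_bound {Ω : Type*} [MeasurableSpace Ω] (μ : Measure Ω) [IsFiniteMeasure μ]
    (f : Ω → ℝ) (hf : Measurable f) (C : ℝ) (h : ∀ ω, |f ω| ≤ C) : Integrable f μ :=
  (integrable_const C).mono' hf.aestronglyMeasurable (ae_of_all _ h)

def polyaQ (n r w c k : ℕ) : ℝ :=
  ((∏ i ∈ Finset.range k, ((r : ℝ) + c * i)) *
      ∏ j ∈ Finset.range (n - k), ((w : ℝ) + c * j)) /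
    ∏ l ∈ Finset.range n, ((r : ℝ) + w + c * l)

lemma polyaQ_pos (n r w c : ℕ) (hr : 0 < r) (hw : 0 < w) (k : ℕ) :
    0 < polyaQ n r w c k := by
  have hr' : (0:ℝ) < r := by exact_mod_cast hr
  have hw' : (0:ℝ) < w := by exact_mod_cast hw
  apply div_pos
  · apply mul_pos
    · exact Finset.prod_pos fun i _ => by positivity
    · exact Finset.prod_pos fun i _ => by positivity
  · exact Finset.prod_pos fun i _ => by positivity

lemma polyaQ_ratio (n r w c : ℕ) (k : ℕ) (hk : k < n) :
    polyaQ n r w c (k+1) * ((r:ℝ) + w + c*((n:ℝ) - 1))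
      = (polyaQ n r w c (k+1) + polyaQ n r w c k) * ((r:ℝ) + c*k) := by
  unfold polyaQ
  obtain ⟨m, hm⟩ : ∃ m, n - k = m + 1 := ⟨n - k - 1, by omega⟩
  have h1 : n - (k+1) = m := by omega
  have h3 : (m : ℝ) = (n:ℝ) - k - 1 := by
    have : m = n - (k+1) := by omega
    rw [this, Nat.cast_sub (by omega : k + 1 ≤ n)]
    push_cast; ring
  rw [h1, hm, Finset.prod_range_succ, Finset.prod_range_succ, h3, ← add_div,
    div_mul_eq_mul_div, div_mul_eq_mul_div]
  congr 1
  ring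

/-- Second regression property of the Pólya urn exchangeable pair:
`E[(W' - W)² | W] = ((2n+b-a)W - 2nW² + a)/(n²(a+b+n-1))`; equivalently, with
`λ = 1/(n(a+b+n-1))`, `(1/(2λ)) E[(W'-W)² | W] = W(1-W) + ((b-a)/(2n)) W + a/(2n)`. -/
theorem polya_second_regression
    {Ω : Type*} [MeasurableSpace Ω] (μ : Measure Ω) [IsProbabilityMeasure μ]
    (n r w c : ℕ) (hn : 0 < n) (hr : 0 < r) (hw : 0 < w) (hc : 0 < c)
    (X : Fin n → Ω → ℝ) (X' : Ω → ℝ)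
    (hXm : ∀ j, Measurable (X j)) (hX'm : Measurable X')
    (hXval : ∀ j ω, X j ω = 0 ∨ X j ω = 1) (hX'val : ∀ ω, X' ω = 0 ∨ X' ω = 1)
    (hjoint : ∀ x : Fin n → Bool,
      μ {ω | ∀ j, X j ω = if x j then 1 else 0} = ENNReal.ofReal (polyaPMF n r w c x))
    (hcond : ∀ x : Fin n → Bool,
      μ ({ω | X' ω = 1} ∩ {ω | ∀ j, X j ω = if x j then 1 else 0}) *
          μ {ω | ∀ j : Fin n, (j : ℕ) < n - 1 → X j ω = if x j then 1 else 0} =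
        μ {ω | ∀ j, X j ω = if x j then 1 else 0} *
          μ ({ω | X ⟨n - 1, Nat.sub_lt hn Nat.one_pos⟩ ω = 1} ∩
            {ω | ∀ j : Fin n, (j : ℕ) < n - 1 → X j ω = if x j then 1 else 0}))
    (A B : ℝ) (hA : A = (r : ℝ) / c) (hB : B = (w : ℝ) / c)
    (W W' : Ω → ℝ)
    (hW : W = fun ω => (∑ j, X j ω) / n)
    (hW' : W' = fun ω => W ω - X ⟨n - 1, Nat.sub_lt hn Nat.one_pos⟩ ω / n + X' ω / n) :
    (μ[(fun ω => (W' ω - W ω) ^ 2) | MeasurableSpace.comap W inferInstance] =ᵐ[μ]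
      fun ω => ((2 * n + B - A) * W ω - 2 * n * (W ω) ^ 2 + A) /
        (n ^ 2 * (A + B + n - 1))) ∧
    (μ[(fun ω => (W' ω - W ω) ^ 2) | MeasurableSpace.comap W inferInstance] =ᵐ[μ]
      fun ω => 2 * (1 / (n * (A + B + n - 1))) *
        (W ω * (1 - W ω) + (B - A) / (2 * n) * W ω + A / (2 * n))) := by
  classical
  have hnR : (0:ℝ) < n := by exact_mod_cast hn
  have hn1 : (1:ℝ) ≤ n := by exact_mod_cast hn
  have hrR : (0:ℝ) < r := by exact_mod_cast hr
  have hwR : (0:ℝ) < w := by exact_mod_cast hw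
  have hcR : (0:ℝ) < c := by exact_mod_cast hc
  set lastI : Fin n := ⟨n - 1, Nat.sub_lt hn Nat.one_pos⟩ with hlastI
  set E : (Fin n → Bool) → Set Ω :=
    fun x => {ω | ∀ j, X j ω = if x j then 1 else 0} with hE
  set kx : (Fin n → Bool) → ℕ :=
    fun x => (Finset.univ.filter fun j => x j = true).card with hkx
  set q : ℕ → ℝ := polyaQ n r w c with hqdef
  have hq_pos : ∀ k, 0 < q k := fun k => polyaQ_pos n r w c hr hw k
  have hjq : ∀ x, μ (E x) = ENNReal.ofReal (q (kx x)) := fun x => hjoint x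
  have hEmeas : ∀ x, MeasurableSet (E x) := by
    intro x
    have : E x = ⋂ j, X j ⁻¹' {if x j then 1 else 0} := by
      ext ω; simp [hE, Set.mem_iInter]
    rw [this]
    exact MeasurableSet.iInter fun j => hXm j (measurableSet_singleton _)
  -- patterns
  have hpat : ∀ ω : Ω, ∃ x : Fin n → Bool, ω ∈ E x := by
    intro ω
    refine ⟨fun j => decide (X j ω = 1), fun j => ?_⟩
    rcases hXval j ω with h | h <;> simp [h]
  have hpat_uniq : ∀ x y : Fin n → Bool, ∀ ω, ω ∈ E x → ω ∈ E y → x = y := by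
    intro x y ω hx hy
    funext j
    have h1 := hx j
    have h2 := hy j
    by_contra hne
    rcases Bool.eq_false_or_eq_true (x j) with h | h <;>
      rcases Bool.eq_false_or_eq_true (y j) with h' | h' <;>
        simp [h, h'] at h1 h2 hne <;> rw [h1] at h2 <;> norm_num at h2
  have hdisj : ∀ x y : Fin n → Bool, x ≠ y → Disjoint (E x) (E y) := by
    intro x y hxy
    rw [Set.disjoint_left]
    intro ω hx hy
    exact hxy (hpat_uniq x y ω hx hy)
  have hWE : ∀ x : Fin n → Bool, ∀ ω ∈ E x, W ω = (kx x : ℝ) / n := by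
    intro x ω hω
    have hsum : (∑ j, X j ω) = (kx x : ℝ) := by
      have hv : ∀ j, X j ω = if x j then (1:ℝ) else 0 := hω
      rw [Finset.sum_congr rfl (fun j _ => hv j), Finset.sum_boole]
    rw [hW]
    simp only
    rw [hsum]
  have hWmeas : Measurable W := by
    rw [hW]
    exact (Finset.measurable_sum Finset.univ fun j _ => hXm j).div_const _
  have hm : MeasurableSpace.comap W inferInstance ≤ _ := measurable_iff_comap_le.mp hWmeas
  have hWm : Measurable[MeasurableSpace.comap W inferInstance] W := fun s hs => ⟨s, hs, rfl⟩
  haveI : SigmaFinite (μ.trim hm) := inferInstance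
  -- boundedness of W
  have hW01 : ∀ ω, 0 ≤ W ω ∧ W ω ≤ 1 := by
    intro ω
    rw [hW]
    constructor
    · apply div_nonneg _ (le_of_lt hnR)
      apply Finset.sum_nonneg
      intro j _
      rcases hXval j ω with h | h <;> rw [h] <;> norm_num
    · rw [div_le_one hnR]
      calc ∑ j, X j ω ≤ ∑ j : Fin n, (1:ℝ) := by
            apply Finset.sum_le_sum
            intro j _
            rcases hXval j ω with h | h <;> rw [h] <;> norm_num
        _ = n := by simp
  have hs0 : 0 < A + B + (n:ℝ) - 1 := by
    rw [hA, hB]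
    have h1 : (r:ℝ)/c + w/c + n - 1 = r/c + w/c + ((n:ℝ) - 1) := by ring
    rw [h1]
    have : (0:ℝ) ≤ (n:ℝ) - 1 := by linarith
    positivity
  -- integrability of f
  have hW'meas : Measurable W' := by
    rw [hW']
    exact ((hWmeas.sub ((hXm lastI).div_const _)).add (hX'm.div_const _))
  have hF_int : Integrable (fun ω => (W' ω - W ω) ^ 2) μ := by
    apply integrable_of_bound μ _ ((hW'meas.sub hWmeas).pow_const 2) 1
    intro ω
    rw [hW']
    simp only [Pi.sub_apply]
    have h1 : W ω - X lastI ω / n + X' ω / n - W ω = (X' ω - X lastI ω)/n := by ring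
    rw [h1, abs_of_nonneg (by positivity)]
    rw [div_pow]
    rw [div_le_one (by positivity)]
    have h2 : (X' ω - X lastI ω)^2 ≤ 1 := by
      rcases hX'val ω with h | h <;> rcases hXval lastI ω with h' | h' <;>
        rw [h, h'] <;> norm_num
    have h3 : (1:ℝ) ≤ (n:ℝ)^2 := by nlinarith
    linarith
  -- the candidate function
  set g1 : Ω → ℝ := fun ω => ((2 * n + B - A) * W ω - 2 * n * (W ω) ^ 2 + A) /
      (n ^ 2 * (A + B + n - 1)) with hg1def
  have hg1_meas : Measurable g1 := by
    apply Measurable.div_const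
    exact ((measurable_const.mul hWmeas).sub
      (measurable_const.mul (hWmeas.pow_const 2))).add_const _
  have hg1_int : Integrable g1 μ := by
    apply integrable_of_bound μ _ hg1_meas
      ((|2*n + B - A| + 2*n + |A|) / (n^2 * (A + B + n - 1)))
    intro ω
    have hden : (0:ℝ) < (n:ℝ)^2*(A+B+(n:ℝ)-1) := mul_pos (by positivity) hs0
    rw [hg1def]
    simp only
    rw [abs_div, abs_of_pos hden]
    rw [div_le_div_iff_of_pos_right hden]
    have hWabs : |W ω| ≤ 1 := abs_le.mpr ⟨by linarith [(hW01 ω).1], (hW01 ω).2⟩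
    have h1 : |(2*(n:ℝ)+B-A) * W ω| ≤ |2*(n:ℝ)+B-A| := by
      rw [abs_mul]; exact mul_le_of_le_one_right (abs_nonneg _) hWabs
    have h2 : |2*(n:ℝ) * W ω^2| ≤ 2*(n:ℝ) := by
      rw [abs_mul, abs_of_nonneg (by positivity : (0:ℝ) ≤ 2*(n:ℝ)),
        abs_of_nonneg (sq_nonneg _)]
      have hWsq : W ω^2 ≤ 1 := by nlinarith [(hW01 ω).1, (hW01 ω).2]
      nlinarith [hWsq, hnR]
    calc |(2*(n:ℝ)+B-A)*W ω - 2*(n:ℝ)*W ω^2 + A|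
        ≤ |(2*(n:ℝ)+B-A)*W ω - 2*(n:ℝ)*W ω^2| + |A| := abs_add_le _ _
      _ ≤ (|(2*(n:ℝ)+B-A)*W ω| + |2*(n:ℝ)*W ω^2|) + |A| :=
          add_le_add_left (abs_sub _ _) _
      _ ≤ |2*(n:ℝ)+B-A| + 2*(n:ℝ) + |A| := by linarith
  -- strong measurability of g1 w.r.t. comap
  have hg1_meas' : AEStronglyMeasurable[MeasurableSpace.comap W inferInstance] g1 μ := by
    refine ⟨g1, ?_, Filter.EventuallyEq.rfl⟩
    have hG : Measurable (fun t : ℝ => ((2 * n + B - A) * t - 2 * n * t ^ 2 + A) /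
        (n ^ 2 * (A + B + n - 1))) := by
      apply Measurable.div_const
      exact ((measurable_const.mul measurable_id).sub
        (measurable_const.mul (measurable_id.pow_const 2))).add_const _
    have hcomp : Measurable[MeasurableSpace.comap W inferInstance] g1 := hG.comp hWm
    exact hcomp.stronglyMeasurable
  -- basic facts about X', lastI, kx
  have hkxn : ∀ x : Fin n → Bool, kx x ≤ n := by
    intro x
    rw [hkx]
    exact (Finset.card_filter_le _ _).trans (by simp)
  have hXlastE : ∀ x : Fin n → Bool, ∀ ω ∈ E x, X lastI ω = (if x lastI then (1:ℝ) else 0) :=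
    fun x ω hω => hω lastI
  have hX'setm : MeasurableSet {ω | X' ω = 1} := hX'm (measurableSet_singleton 1)
  have hX'int : Integrable X' μ := integrable_of_bound μ X' hX'm 1 (by
    intro ω; rcases hX'val ω with h | h <;> rw [h] <;> norm_num)
  have hintX' : ∀ x : Fin n → Bool,
      ∫ ω in E x, X' ω ∂μ = (μ ({ω | X' ω = 1} ∩ E x)).toReal := by
    intro x
    have hX'ind : ∀ ω, X' ω = Set.indicator {ω' | X' ω' = 1} (fun _ => (1:ℝ)) ω := by
      intro ω
      rcases hX'val ω with h | h
      · rw [h, Set.indicator_of_notMem]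
        simp only [Set.mem_setOf_eq, h]
        norm_num
      · rw [h, Set.indicator_of_mem]
        exact h
    rw [setIntegral_congr_fun (hEmeas x) (fun ω _ => hX'ind ω), setIntegral_indicator hX'setm,
      setIntegral_const, smul_eq_mul, mul_one, Set.inter_comm]
    rfl
  -- first form of the per-pattern integral of f
  have hfE1 : ∀ x : Fin n → Bool,
      ∫ ω in E x, (W' ω - W ω)^2 ∂μ
        = ((1 - 2*(if x lastI then (1:ℝ) else 0)) * (μ ({ω | X' ω = 1} ∩ E x)).toReal
            + (if x lastI then (1:ℝ) else 0) * q (kx x)) / (n:ℝ)^2 := by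
    intro x
    set e : ℝ := if x lastI then (1:ℝ) else 0 with he
    have hpt : EqOn (fun ω => (W' ω - W ω)^2)
        (fun ω => ((1-2*e)/(n:ℝ)^2) * X' ω + e/(n:ℝ)^2) (E x) := by
      intro ω hω
      rw [hW']
      simp only
      have h1 : W ω - X lastI ω / n + X' ω / n - W ω = (X' ω - X lastI ω)/n := by ring
      rw [h1, div_pow, hXlastE x ω hω]
      rcases hX'val ω with h | h <;>
        rcases Bool.eq_false_or_eq_true (x lastI) with hb | hb <;>
          rw [h, he, hb] <;> simp <;> ring
    rw [setIntegral_congr_fun (hEmeas x) hpt]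
    rw [integral_add ((hX'int.integrableOn).const_mul _) (integrableOn_const
      (measure_lt_top _ _).ne)]
    rw [integral_const_mul, hintX' x, setIntegral_const, smul_eq_mul, measureReal_def, hjq x,
      ENNReal.toReal_ofReal (le_of_lt (hq_pos _))]
    ring
  -- the key per-pattern formula
  have hfE : ∀ x : Fin n → Bool,
      ∫ ω in E x, (W' ω - W ω)^2 ∂μ
        = q (kx x) * (if x lastI then (w:ℝ) + c*((n:ℝ) - (kx x : ℝ)) else (r:ℝ) + c*(kx x : ℝ))
            / (((r:ℝ) + w + c*((n:ℝ)-1)) * (n:ℝ)^2) := by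
    intro x
    set R : ℝ := (r:ℝ) + w + c*((n:ℝ)-1) with hRdef
    have hRpos : 0 < R := by
      rw [hRdef]
      have h1 : (0:ℝ) ≤ (n:ℝ)-1 := by linarith
      positivity
    set t : ℝ := (μ ({ω | X' ω = 1} ∩ E x)).toReal with ht
    set x1 : Fin n → Bool := Function.update x lastI true with hx1
    set x0 : Fin n → Bool := Function.update x lastI false with hx0
    have hlv : (lastI : ℕ) = n - 1 := rfl
    have hjne : ∀ j : Fin n, j ≠ lastI → (j:ℕ) < n - 1 := by
      intro j hj
      have h1 := j.isLt
      have h2 : (j:ℕ) ≠ n - 1 := fun h => hj (Fin.ext (by rw [h, hlv]))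
      omega
    have hpre : {ω | ∀ j : Fin n, (j : ℕ) < n - 1 → X j ω = if x j then 1 else 0}
        = E x1 ∪ E x0 := by
      ext ω
      constructor
      · intro hω
        rcases hXval lastI ω with h0 | h1
        · right
          intro j
          by_cases hj : j = lastI
          · subst hj; simp only [hx0, Function.update_self, if_false, Bool.false_eq_true]; exact h0
          · rw [hx0, Function.update_of_ne hj]
            exact hω j (hjne j hj)
        · left
          intro j
          by_cases hj : j = lastI
          · subst hj; simp only [hx1, Function.update_self, if_true]; exact h1
          · rw [hx1, Function.update_of_ne hj]
            exact hω j (hjne j hj)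
      · intro hω j hj
        have hjne' : j ≠ lastI := by
          intro h; rw [h, hlv] at hj; exact lt_irrefl _ hj
        rcases hω with h | h
        · have h2 := h j; rwa [hx1, Function.update_of_ne hjne'] at h2
        · have h2 := h j; rwa [hx0, Function.update_of_ne hjne'] at h2
    have hlast1 : {ω | X lastI ω = 1}
          ∩ {ω | ∀ j : Fin n, (j : ℕ) < n - 1 → X j ω = if x j then 1 else 0}
        = E x1 := by
      ext ω
      constructor
      · rintro ⟨h1, hω⟩
        intro j
        by_cases hj : j = lastI
        · subst hj; simp only [hx1, Function.update_self, if_true]; exact h1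
        · rw [hx1, Function.update_of_ne hj]; exact hω j (hjne j hj)
      · intro hω
        refine ⟨?_, ?_⟩
        · have h2 := hω lastI
          rw [hx1, Function.update_self] at h2
          simpa using h2
        · intro j hj
          have hjne' : j ≠ lastI := by
            intro h; rw [h, hlv] at hj; exact lt_irrefl _ hj
          have h2 := hω j; rwa [hx1, Function.update_of_ne hjne'] at h2
    have hne10 : x1 ≠ x0 := by
      intro h
      have h2 := congrFun h lastI
      rw [hx1, hx0, Function.update_self, Function.update_self] at h2
      exact Bool.noConfusion h2
    have hμpre : μ {ω | ∀ j : Fin n, (j : ℕ) < n - 1 → X j ω = if x j then 1 else 0}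
        = ENNReal.ofReal (q (kx x1)) + ENNReal.ofReal (q (kx x0)) := by
      rw [hpre, measure_union (hdisj x1 x0 hne10) (hEmeas x0), hjq, hjq]
    have hkey := hcond x
    rw [hμpre, hlast1, hjq x, hjq x1] at hkey
    have htq : t * (q (kx x1) + q (kx x0)) = q (kx x) * q (kx x1) := by
      have h2 := congrArg ENNReal.toReal hkey
      rw [← ENNReal.ofReal_add (le_of_lt (hq_pos _)) (le_of_lt (hq_pos _)),
        ENNReal.toReal_mul, ENNReal.toReal_mul, ENNReal.toReal_ofReal, ENNReal.toReal_ofReal,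
        ENNReal.toReal_ofReal] at h2
      · exact h2
      all_goals first
        | exact le_of_lt (hq_pos _)
        | exact add_nonneg (le_of_lt (hq_pos _)) (le_of_lt (hq_pos _))
    have hfe1 := hfE1 x
    rcases Bool.eq_false_or_eq_true (x lastI) with hxl | hxl
    · -- x lastI = true
      have hx1x : x1 = x := by
        rw [hx1, ← hxl, Function.update_eq_self]
      obtain ⟨k', hk'⟩ : ∃ k', kx x = k' + 1 := by
        have hmem : lastI ∈ Finset.univ.filter (fun j => x j = true) := by simp [hxl]
        have : 0 < kx x := by
          rw [hkx]; exact Finset.card_pos.mpr ⟨lastI, hmem⟩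
        exact ⟨kx x - 1, by omega⟩
      have hkx0 : kx x0 = k' := by
        have hfil : Finset.univ.filter (fun j => x0 j = true)
            = (Finset.univ.filter fun j => x j = true).erase lastI := by
          ext j
          by_cases hj : j = lastI <;>
            simp [hj, hx0, Function.update_self, Function.update_of_ne, hxl]
        rw [hkx]
        simp only
        rw [hfil, Finset.card_erase_of_mem (by simp [hxl])]
        have : kx x = k' + 1 := hk'
        rw [hkx] at this
        simp only at this
        omega
      have hk'lt : k' < n := by
        have := hkxn x
        omega
      have hrat := polyaQ_ratio n r w c k' hk'lt
      rw [← hk'] at hrat  -- may fail: hrat has (k'+1)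
      rw [hx1x, hkx0] at htq
      have hsum_pos : 0 < q (kx x) + q k' := by
        have := hq_pos (kx x); have := hq_pos k'; linarith
      have htR : t * R = q (kx x) * ((r:ℝ) + c * (k':ℝ)) := by
        apply mul_right_cancel₀ (ne_of_gt hsum_pos)
        calc t * R * (q (kx x) + q k')
            = (t * (q (kx x) + q k')) * R := by ring
          _ = (q (kx x) * q (kx x)) * R := by rw [htq]
          _ = q (kx x) * (q (kx x) * R) := by ring
          _ = q (kx x) * ((q (kx x) + q k') * ((r:ℝ) + c*(k':ℝ))) := by
              rw [hqdef, hrat]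
          _ = q (kx x) * ((r:ℝ) + c * (k':ℝ)) * (q (kx x) + q k') := by ring
      have hcast : (kx x : ℝ) = (k' : ℝ) + 1 := by exact_mod_cast congrArg Nat.cast hk'
      rw [hfe1, ← ht, hxl]
      simp only [if_true]
      have htval : t = q (kx x) * ((r:ℝ) + c*(k':ℝ)) / R := by
        rw [eq_div_iff (ne_of_gt hRpos)]; exact htR
      rw [htval, hcast]
      field_simp
      ring
    · -- x lastI = false
      have hx0x : x0 = x := by
        rw [hx0, ← hxl, Function.update_eq_self]
      have hkx1 : kx x1 = kx x + 1 := by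
        have hfil : Finset.univ.filter (fun j => x1 j = true)
            = insert lastI (Finset.univ.filter fun j => x j = true) := by
          ext j
          by_cases hj : j = lastI <;>
            simp [hj, hx1, Function.update_self, Function.update_of_ne, hxl]
        rw [hkx]
        simp only
        rw [hfil, Finset.card_insert_of_notMem (by simp [hxl])]
      have hkxlt : kx x < n := by
        have hnotin : lastI ∉ Finset.univ.filter (fun j => x j = true) := by simp [hxl]
        have hss : Finset.univ.filter (fun j => x j = true) ⊂ Finset.univ :=
          ⟨Finset.subset_univ _, fun h => hnotin (h (Finset.mem_univ lastI))⟩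
        calc kx x < Finset.univ.card := Finset.card_lt_card hss
          _ = n := by simp
      rw [hx0x] at htq
      have hrat := polyaQ_ratio n r w c (kx x) hkxlt
      rw [← hkx1] at hrat
      have hsum_pos : 0 < q (kx x1) + q (kx x) := by
        have := hq_pos (kx x1); have := hq_pos (kx x); linarith
      have htR : t * R = q (kx x) * ((r:ℝ) + c * (kx x)) := by
        apply mul_right_cancel₀ (ne_of_gt hsum_pos)
        calc t * R * (q (kx x1) + q (kx x))
            = (t * (q (kx x1) + q (kx x))) * R := by ring
          _ = (q (kx x) * q (kx x1)) * R := by rw [htq]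
          _ = q (kx x) * (q (kx x1) * R) := by ring
          _ = q (kx x) * ((q (kx x1) + q (kx x)) * ((r:ℝ) + c*(kx x))) := by
              rw [hqdef, hrat]
          _ = q (kx x) * ((r:ℝ) + c * (kx x)) * (q (kx x1) + q (kx x)) := by ring
      have htval : t = q (kx x) * ((r:ℝ) + c*(kx x)) / R := by
        rw [eq_div_iff (ne_of_gt hRpos)]; exact htR
      rw [hfe1, ← ht, hxl]
      simp only [Bool.false_eq_true, if_false]
      rw [htval]
      field_simp
      ring
  -- per-pattern integral of g1
  have hgE : ∀ x : Fin n → Bool,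
      ∫ ω in E x, g1 ω ∂μ
        = (((2*(n:ℝ) + B - A) * ((kx x : ℝ)/n) - 2*(n:ℝ)*((kx x : ℝ)/n)^2 + A) /
            ((n:ℝ)^2 * (A + B + (n:ℝ) - 1))) * q (kx x) := by
    intro x
    have hconst : EqOn g1 (fun _ : Ω => (((2*(n:ℝ)+B-A)*((kx x : ℝ)/n)
        - 2*(n:ℝ)*((kx x : ℝ)/n)^2 + A)/((n:ℝ)^2*(A+B+(n:ℝ)-1)))) (E x) := by
      intro ω hω
      rw [hg1def]
      simp only
      rw [hWE x ω hω]
    rw [setIntegral_congr_fun (hEmeas x) hconst, setIntegral_const, measureReal_def, hjq x,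
      ENNReal.toReal_ofReal (le_of_lt (hq_pos _)), smul_eq_mul, mul_comm]
  -- class identity
  have hclass : ∀ k : ℕ, k ≤ n →
      ∑ x ∈ Finset.univ.filter (fun x : Fin n → Bool => kx x = k), ∫ ω in E x, g1 ω ∂μ
        = ∑ x ∈ Finset.univ.filter (fun x : Fin n → Bool => kx x = k),
            ∫ ω in E x, (W' ω - W ω)^2 ∂μ := by
    intro k hkn
    set R : ℝ := (r:ℝ) + w + c*((n:ℝ)-1) with hRdef
    have hRpos : 0 < R := by
      rw [hRdef]
      have h1 : (0:ℝ) ≤ (n:ℝ)-1 := by linarith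
      positivity
    set S := Finset.univ.filter (fun x : Fin n → Bool => kx x = k) with hSdef
    set HH : ℝ := ((2*(n:ℝ) + B - A) * ((k : ℝ)/n) - 2*(n:ℝ)*((k : ℝ)/n)^2 + A) /
        ((n:ℝ)^2 * (A + B + (n:ℝ) - 1)) with hHH
    have hL : ∑ x ∈ S, ∫ ω in E x, (W' ω - W ω)^2 ∂μ
        = ∑ x ∈ S, (if x lastI = true then q k * ((w:ℝ) + c*((n:ℝ) - (k:ℝ)))/(R*(n:ℝ)^2)
            else q k * ((r:ℝ) + c*(k:ℝ))/(R*(n:ℝ)^2)) := by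
      apply Finset.sum_congr rfl
      intro x hx
      have hkxk : kx x = k := (Finset.mem_filter.mp hx).2
      rw [hfE x, hkxk]
      rcases Bool.eq_false_or_eq_true (x lastI) with h | h <;> rw [h] <;> simp
    have hRg : ∑ x ∈ S, ∫ ω in E x, g1 ω ∂μ = (S.card : ℝ) * (HH * q k) := by
      rw [Finset.sum_congr rfl (fun x hx => by
        rw [hgE x, (Finset.mem_filter.mp hx).2, ← hHH]), Finset.sum_const, nsmul_eq_mul]
    rw [hL, hRg, Finset.sum_ite, Finset.sum_const, Finset.sum_const, nsmul_eq_mul, nsmul_eq_mul]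
    set N1 := (S.filter (fun x => x lastI = true)).card with hN1
    set N0 := (S.filter (fun x => ¬ x lastI = true)).card with hN0
    have hcard : S.card = N1 + N0 := by
      rw [hN1, hN0, Finset.card_filter_add_card_filter_not]
    have hccnat : k * S.card = n * N1 := by
      have h := count_constraint (n := n) k lastI
      have hmatch : S.filter (fun x => x lastI = true)
          = Finset.univ.filter (fun x : Fin n → Bool => kx x = k ∧ x lastI = true) := by
        rw [hSdef, Finset.filter_filter]
      rw [hN1, hmatch]
      rw [hSdef, hkx] at *
      exact h
    have hcc : (k:ℝ) * ((N1:ℝ) + (N0:ℝ)) = (n:ℝ) * (N1:ℝ) := by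
      have h2 : (k:ℝ) * (S.card : ℝ) = (n:ℝ) * (N1:ℝ) := by exact_mod_cast hccnat
      rw [← h2, hcard]
      push_cast
      ring
    have halg := polya_alg (n:ℝ) (k:ℝ) (r:ℝ) (w:ℝ) (c:ℝ) (N1:ℝ) (N0:ℝ) hn1 hrR hwR hcR hcc
    have hHH' : HH = ((2 * (n:ℝ) + (w:ℝ) / c - (r:ℝ) / c) * ((k:ℝ) / n)
        - 2 * n * ((k:ℝ) / n) ^ 2 + (r:ℝ) / c) / ((n:ℝ) ^ 2 * ((r:ℝ) / c + (w:ℝ) / c + n - 1)) := by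
      rw [hHH, hA, hB]
    have hRn2 : R * (n:ℝ)^2 ≠ 0 := by positivity
    have hRform : ((r:ℝ) + (w:ℝ) + (c:ℝ) * ((n:ℝ) - 1)) = R := by rw [hRdef]
    rw [hRform, ← hHH'] at halg
    calc ((S.card : ℝ)) * (HH * q k)
        = ((N1:ℝ) + N0) * HH * (R * (n:ℝ)^2) * q k / (R * (n:ℝ)^2) := by
          rw [hcard]
          push_cast
          field_simp
      _ = ((N1:ℝ) * ((w:ℝ) + c*((n:ℝ) - (k:ℝ))) + (N0:ℝ) * ((r:ℝ) + c*(k:ℝ))) * q k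
            / (R * (n:ℝ)^2) := by rw [← halg]
      _ = (N1:ℝ) * (q k * ((w:ℝ) + c*((n:ℝ) - (k:ℝ)))/(R*(n:ℝ)^2))
            + (N0:ℝ) * (q k * ((r:ℝ) + c*(k:ℝ))/(R*(n:ℝ)^2)) := by ring
  -- set-integral equality on comap-measurable sets
  have hg_eq : ∀ s : Set Ω, MeasurableSet[MeasurableSpace.comap W inferInstance] s →
      μ s < ⊤ → ∫ ω in s, g1 ω ∂μ = ∫ ω in s, (W' ω - W ω)^2 ∂μ := by
    rintro s ⟨Bs, hBs, rfl⟩ _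
    set T : Finset (Fin n → Bool) :=
      Finset.univ.filter (fun x => ((kx x : ℝ)/n) ∈ Bs) with hT
    have hsT : W ⁻¹' Bs = ⋃ x ∈ T, E x := by
      ext ω
      simp only [Set.mem_preimage, Set.mem_iUnion]
      constructor
      · intro hωB
        obtain ⟨x, hx⟩ := hpat ω
        refine ⟨x, ?_, hx⟩
        rw [hT, Finset.mem_filter]
        exact ⟨Finset.mem_univ x, by rw [← hWE x ω hx]; exact hωB⟩
      · rintro ⟨x, hxT, hx⟩
        rw [hWE x ω hx]
        rw [hT, Finset.mem_filter] at hxT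
        exact hxT.2
    rw [hsT, integral_biUnion_finset T (fun x _ => hEmeas x)
        (fun x _ y _ hxy => hdisj x y hxy) (fun x _ => hg1_int.integrableOn),
      integral_biUnion_finset T (fun x _ => hEmeas x)
        (fun x _ y _ hxy => hdisj x y hxy) (fun x _ => hF_int.integrableOn)]
    have hmaps : ∀ x ∈ T, kx x ∈ Finset.range (n+1) := by
      intro x _
      rw [Finset.mem_range]
      exact Nat.lt_succ_of_le (hkxn x)
    rw [← Finset.sum_fiberwise_of_maps_to hmaps (fun x => ∫ ω in E x, g1 ω ∂μ),
        ← Finset.sum_fiberwise_of_maps_to hmaps (fun x => ∫ ω in E x, (W' ω - W ω)^2 ∂μ)]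
    apply Finset.sum_congr rfl
    intro k hk
    by_cases hkB : ((k:ℝ)/n) ∈ Bs
    · have hfe : T.filter (fun x => kx x = k) = Finset.univ.filter (fun x => kx x = k) := by
        rw [hT, Finset.filter_filter]
        ext x
        simp only [Finset.mem_filter, Finset.mem_univ, true_and]
        constructor
        · rintro ⟨_, h2⟩; exact h2
        · intro h2; exact ⟨by rw [h2]; exact hkB, h2⟩
      rw [hfe]
      exact hclass k (Nat.lt_succ_iff.mp (Finset.mem_range.mp hk))
    · have hfe : T.filter (fun x => kx x = k) = ∅ := by
        rw [hT, Finset.filter_filter]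
        ext x
        simp only [Finset.mem_filter, Finset.mem_univ, true_and, Finset.notMem_empty, iff_false,
          not_and]
        intro h1 h2
        rw [h2] at h1
        exact hkB h1
      rw [hfe]
      simp
  -- conclusion
  have hmain : g1 =ᵐ[μ]
      μ[(fun ω => (W' ω - W ω) ^ 2) | MeasurableSpace.comap W inferInstance] :=
    ae_eq_condExp_of_forall_setIntegral_eq hm hF_int
      (fun s _ _ => hg1_int.integrableOn) hg_eq hg1_meas'
  refine ⟨hmain.symm, hmain.symm.trans ?_⟩
  apply Filter.Eventually.of_forall
  intro ω
  rw [hg1def]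
  simp only
  have hs0' : A + B + (n:ℝ) - 1 ≠ 0 := ne_of_gt hs0
  have hn' : (n:ℝ) ≠ 0 := ne_of_gt hnR
  field_simp
  ring
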